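/- Let (λ_n)_{n∈ℕ} ∈ Λ. Then for every t ∈ [0,1] there exist rational numbers q_i ∈ ℚ ∩ [0,1], i ∈ ℕ, such that t = ∑_{i=1}^∞ λ_i q_i; consequently, 1 − t = ∑_{i=1}^∞ λ_i (1 − q_i). -/

import Mathlib

/-- Daróczy–Páles lemma: for `(λ_n) ∈ Λ` and any `t ∈ [0,1]`, there exist rationals
`q_i ∈ ℚ ∩ [0,1]` with `t = ∑ λ_i q_i`; consequently `1 − t = ∑ λ_i (1 − q_i)`. -/
theorem stmt_14 (lam : ℕ → ℝ) (hpos : ∀ n, 0 < lam n) (hanti : Antitone lam)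
    (hsum : HasSum lam 1) :
    ∀ t ∈ Set.Icc (0 : ℝ) 1, ∃ q : ℕ → ℚ,
      (∀ i, (q i : ℝ) ∈ Set.Icc (0 : ℝ) 1) ∧
      HasSum (fun i => lam i * (q i : ℝ)) t ∧
      HasSum (fun i => lam i * (1 - (q i : ℝ))) (1 - t) := by
  intro t ht
  have hsummable : Summable lam := hsum.summable
  set T : ℕ → ℝ := fun n => ∑' k, lam (k + n) with hTdef
  have hTsummable : ∀ n, Summable fun k => lam (k + n) := fun n =>
    (summable_nat_add_iff n).2 hsummable
  have hT0 : T 0 = 1 := by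
    have : (fun k => lam (k + 0)) = lam := by funext k; simp
    simp only [hTdef, this]
    exact hsum.tsum_eq
  have hTrec : ∀ n, T n = lam n + T (n + 1) := by
    intro n
    have h := Summable.tsum_eq_zero_add (hTsummable n)
    simp only [zero_add] at h
    simp only [hTdef]
    rw [h]
    congr 1
    apply tsum_congr
    intro k
    congr 1
    omega
  have hTpos : ∀ n, 0 < T n := by
    intro n
    rw [hTrec n]
    have h1 : 0 ≤ T (n + 1) := tsum_nonneg fun k => (hpos _).le
    linarith [hpos n]
  have hTtendsto : Filter.Tendsto T Filter.atTop (nhds 0) :=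
    tendsto_sum_nat_add lam
  -- step lemma
  have step : ∀ n, ∀ r : ℝ, 0 ≤ r → r ≤ T n →
      ∃ q : ℚ, 0 ≤ (q : ℝ) ∧ (q : ℝ) ≤ 1 ∧ 0 ≤ r - lam n * q ∧
        r - lam n * q ≤ T (n + 1) := by
    intro n r h0 h1
    by_cases hc : r ≤ T (n + 1)
    · exact ⟨0, by norm_num, by norm_num, by simpa using h0, by simpa using hc⟩
    push_neg at hc
    by_cases hd : (r - T (n + 1)) / lam n < 1
    · have hlt : (r - T (n + 1)) / lam n < min (r / lam n) 1 := by
        apply lt_min _ hd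
        apply div_lt_div_of_pos_right _ (hpos n)
        linarith [hTpos (n + 1)]
      obtain ⟨qq, hq1, hq2⟩ := exists_rat_btwn hlt
      have hq2a : (qq : ℝ) < r / lam n := lt_of_lt_of_le hq2 (min_le_left _ _)
      have hq2b : (qq : ℝ) < 1 := lt_of_lt_of_le hq2 (min_le_right _ _)
      have hlow : 0 < (r - T (n + 1)) / lam n := by
        apply div_pos _ (hpos n); linarith
      refine ⟨qq, by linarith, hq2b.le, ?_, ?_⟩
      · nlinarith [(lt_div_iff₀ (hpos n)).1 hq2a]
      · nlinarith [(div_lt_iff₀ (hpos n)).1 hq1]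
    · push_neg at hd
      have hge : lam n ≤ r - T (n + 1) := by
        have := (one_le_div (hpos n)).1 hd
        linarith
      refine ⟨1, by norm_num, by norm_num, ?_, ?_⟩
      · push_cast
        linarith [hTpos (n + 1)]
      · push_cast
        rw [hTrec n] at h1
        linarith
  -- choice function, total
  have hg : ∀ n, ∀ r : ℝ, ∃ qq : ℚ, (0 ≤ r → r ≤ T n →
      0 ≤ (qq : ℝ) ∧ (qq : ℝ) ≤ 1 ∧ 0 ≤ r - lam n * qq ∧
        r - lam n * qq ≤ T (n + 1)) := by
    intro n r
    by_cases h : 0 ≤ r ∧ r ≤ T n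
    · obtain ⟨qq, hq⟩ := step n r h.1 h.2
      exact ⟨qq, fun _ _ => hq⟩
    · exact ⟨0, fun h1 h2 => absurd ⟨h1, h2⟩ h⟩
  choose g hgspec using hg
  set R : ℕ → ℝ := fun n => Nat.rec t (fun m rm => rm - lam m * (g m rm : ℝ)) n with hRdef
  set q : ℕ → ℚ := fun n => g n (R n) with hqdef
  have hRsucc : ∀ n, R (n + 1) = R n - lam n * (q n : ℝ) := fun n => rfl
  have hinv : ∀ n, 0 ≤ R n ∧ R n ≤ T n := by
    intro n
    induction n with
    | zero => exact ⟨ht.1, hT0 ▸ ht.2⟩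
    | succ m ih =>
      obtain ⟨_, _, h3, h4⟩ := hgspec m (R m) ih.1 ih.2
      rw [hRsucc m]
      exact ⟨h3, h4⟩
  have hspec : ∀ n, 0 ≤ ((q n : ℝ)) ∧ (q n : ℝ) ≤ 1 :=
    fun n => ⟨(hgspec n (R n) (hinv n).1 (hinv n).2).1,
      (hgspec n (R n) (hinv n).1 (hinv n).2).2.1⟩
  have hpart : ∀ n, ∑ i ∈ Finset.range n, lam i * (q i : ℝ) = t - R n := by
    intro n
    induction n with
    | zero => simp [hRdef]
    | succ m ih =>
      rw [Finset.sum_range_succ, ih, hRsucc m]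
      ring
  have hRto0 : Filter.Tendsto R Filter.atTop (nhds 0) :=
    squeeze_zero (fun n => (hinv n).1) (fun n => (hinv n).2) hTtendsto
  have hpartto : Filter.Tendsto (fun n => ∑ i ∈ Finset.range n, lam i * (q i : ℝ))
      Filter.atTop (nhds t) := by
    have : Filter.Tendsto (fun n => t - R n) Filter.atTop (nhds (t - 0)) :=
      Filter.Tendsto.const_sub t hRto0
    simp only [sub_zero] at this
    simpa only [hpart] using this
  have hhs1 : HasSum (fun i => lam i * (q i : ℝ)) t := by
    rw [hasSum_iff_tendsto_nat_of_nonneg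
      (fun i => mul_nonneg (hpos i).le (hspec i).1)]
    exact hpartto
  refine ⟨q, fun i => ⟨(hspec i).1, (hspec i).2⟩, hhs1, ?_⟩
  have := hsum.sub hhs1
  convert this using 2 with i
  · rfl
  ring
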